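/- Let A, B, C be complex D×D Hermitian matrices with A = B + δ·C for some real δ ≥ 0, such that B is positive semidefinite, C is positive semidefinite, and I − C is positive semidefinite (i.e., 0 ⪯ C ⪯ I). Let η be a unit vector with Bη = 0 and let ω be a unit vector with |⟨ω, η⟩|² = 1 − p for some p ∈ [0,1]. Then ⟨ω, Aω⟩ ≥ (1 − p)·⟨η, Aη⟩ − 2δ·√p. -/

import Mathlib

open Matrix
open scoped ComplexOrder

lemma psd_cauchy_schwarz {D : ℕ} {C : Matrix (Fin D) (Fin D) ℂ} (hC : C.PosSemidef)
    (x y : Fin D → ℂ) :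
    ‖star x ⬝ᵥ C.mulVec y‖
      ≤ Real.sqrt (star x ⬝ᵥ C.mulVec x).re * Real.sqrt (star y ⬝ᵥ C.mulVec y).re := by
  open scoped MatrixOrder Matrix.Norms.L2Operator in
  obtain ⟨M, hM⟩ := CStarAlgebra.nonneg_iff_eq_star_mul_self.mp hC.nonneg
  rw [Matrix.star_eq_conjTranspose] at hM; subst hM
  have key : ∀ a b : Fin D → ℂ, star a ⬝ᵥ (Mᴴ * M).mulVec b
      = (inner ℂ ((WithLp.equiv 2 _).symm (M.mulVec a)) ((WithLp.equiv 2 _).symm (M.mulVec b)) : ℂ) := by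
    intro a b
    rw [show ∀ f g : Fin D → ℂ, (inner ℂ ((WithLp.equiv 2 _).symm f) ((WithLp.equiv 2 _).symm g) : ℂ) = star f ⬝ᵥ g from fun f g => by rw [dotProduct_comm]; rfl, ← Matrix.mulVec_mulVec,
      Matrix.dotProduct_mulVec, ← Matrix.star_mulVec]
  rw [key, key, key]
  set u := (WithLp.equiv 2 (Fin D → ℂ)).symm (M.mulVec x)
  set w := (WithLp.equiv 2 (Fin D → ℂ)).symm (M.mulVec y)
  have h1 : ‖u‖ = Real.sqrt (inner ℂ u u : ℂ).re := by rw [@norm_eq_sqrt_re_inner ℂ]; rfl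
  have h2 : ‖w‖ = Real.sqrt (inner ℂ w w : ℂ).re := by rw [@norm_eq_sqrt_re_inner ℂ]; rfl
  rw [← h1, ← h2]
  exact norm_inner_le_norm u w

lemma psd_re_nonneg {D : ℕ} {M : Matrix (Fin D) (Fin D) ℂ} (hM : M.PosSemidef)
    (x : Fin D → ℂ) : 0 ≤ (star x ⬝ᵥ M.mulVec x).re :=
  (Complex.le_def.mp (hM.dotProduct_mulVec_nonneg x)).1

/-- Perturbative lower bound. If A = B + δC with δ ≥ 0, B ⪰ 0,
0 ⪯ C ⪯ I (all Hermitian), η a unit vector with Bη = 0, and ω a unit vector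
with |⟨ω,η⟩|² = 1 − p, then ⟨ω, Aω⟩ ≥ (1 − p)·⟨η, Aη⟩ − 2δ√p. -/
theorem perturbative_lower_bound (D : ℕ)
    (A B C : Matrix (Fin D) (Fin D) ℂ)
    (hA : A.IsHermitian) (hB : B.IsHermitian) (hC : C.IsHermitian)
    (δ : ℝ) (hδ : 0 ≤ δ) (hABC : A = B + (δ : ℂ) • C)
    (hBpsd : B.PosSemidef) (hCpsd : C.PosSemidef) (hCle : (1 - C).PosSemidef)
    (η ω : Fin D → ℂ)
    (hη : star η ⬝ᵥ η = 1) (hω : star ω ⬝ᵥ ω = 1)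
    (hBη : B.mulVec η = 0)
    (p : ℝ) (hp0 : 0 ≤ p) (hp1 : p ≤ 1)
    (hover : ‖star ω ⬝ᵥ η‖ ^ 2 = 1 - p) :
    (1 - p) * (star η ⬝ᵥ A.mulVec η).re - 2 * δ * Real.sqrt p
      ≤ (star ω ⬝ᵥ A.mulVec ω).re := by
  set c : ℂ := star η ⬝ᵥ ω with hc
  set v : Fin D → ℂ := ω - c • η with hv
  have hcstar : c = star (star ω ⬝ᵥ η) := Matrix.star_dotProduct η ω
  have hc2 : ‖c‖ ^ 2 = 1 - p := by
    rw [hcstar]; simpa using hover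
  have hcc : (starRingEnd ℂ) c * c = ((1 - p : ℝ) : ℂ) := by
    rw [mul_comm, Complex.mul_conj, ← Complex.sq_norm, hc2]
  have hstarv : star v = star ω - (starRingEnd ℂ) c • star η := by
    simp [hv, star_smul]
  have hηv : star η ⬝ᵥ v = 0 := by
    rw [hv, dotProduct_sub, dotProduct_smul, hη, smul_eq_mul, mul_one, ← hc, sub_self]
  have hvη : star v ⬝ᵥ η = 0 := by
    rw [Matrix.star_dotProduct, hηv, star_zero]
  have hωη : star ω ⬝ᵥ η = (starRingEnd ℂ) c := by simp [hcstar]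
  have hvv : star v ⬝ᵥ v = ((p : ℝ) : ℂ) := by
    rw [hstarv, hv]
    simp only [sub_dotProduct, dotProduct_sub, smul_dotProduct, dotProduct_smul,
      smul_eq_mul, hη, hω, hωη, mul_one]
    rw [mul_comm c, hcc]
    push_cast; ring
  have hωd : ω = c • η + v := by simp [hv]
  -- abbreviations
  set q : ℝ := (star η ⬝ᵥ C.mulVec η).re with hq
  set t : ℝ := (star v ⬝ᵥ C.mulVec v).re with ht
  set z : ℂ := star η ⬝ᵥ C.mulVec v with hz
  have hq0 : 0 ≤ q := psd_re_nonneg hCpsd η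
  have ht0 : 0 ≤ t := psd_re_nonneg hCpsd v
  have hq1 : q ≤ 1 := by
    have h := psd_re_nonneg hCle η
    rw [sub_mulVec, one_mulVec, dotProduct_sub, Complex.sub_re, hη] at h
    rw [Complex.one_re] at h; linarith
  have htp : t ≤ p := by
    have h := psd_re_nonneg hCle v
    rw [sub_mulVec, one_mulVec, dotProduct_sub, Complex.sub_re, hvv] at h
    simp only [Complex.ofReal_re] at h
    linarith
  -- |c| ≤ 1
  have hcabs : ‖c‖ ≤ 1 := by
    nlinarith [norm_nonneg c, hc2]
  -- Cauchy-Schwarz bound on z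
  have hzb : ‖z‖ ≤ Real.sqrt p := by
    calc ‖z‖ ≤ Real.sqrt q * Real.sqrt t := psd_cauchy_schwarz hCpsd η v
    _ ≤ 1 * Real.sqrt p := by
        apply mul_le_mul
        · rw [show (1:ℝ) = Real.sqrt 1 by simp]; exact Real.sqrt_le_sqrt hq1
        · exact Real.sqrt_le_sqrt htp
        · exact Real.sqrt_nonneg _
        · norm_num
    _ = Real.sqrt p := one_mul _
  -- conjugate relation
  have hzconj : star v ⬝ᵥ C.mulVec η = (starRingEnd ℂ) z := by
    rw [Matrix.star_dotProduct, Matrix.star_mulVec, show Cᴴ = C from hC,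
      ← Matrix.dotProduct_mulVec]
    rfl
  -- expansion of ⟨ω, Cω⟩
  have hexp : star ω ⬝ᵥ C.mulVec ω
      = ((1 - p : ℝ) : ℂ) * (star η ⬝ᵥ C.mulVec η)
        + ((starRingEnd ℂ) c * z + c * (starRingEnd ℂ) z) + star v ⬝ᵥ C.mulVec v := by
    conv_lhs => rw [hωd]
    rw [← hzconj]
    have : star (c • η + v) = (starRingEnd ℂ) c • star η + star v := by
      simp [star_smul]
    rw [this, mulVec_add, mulVec_smul]
    simp only [add_dotProduct, dotProduct_add, dotProduct_smul, smul_dotProduct,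
      smul_eq_mul]
    rw [← hcc]
    ring
  have hcross : -(2 * Real.sqrt p) ≤ ((starRingEnd ℂ) c * z + c * (starRingEnd ℂ) z).re := by
    have heq : ((starRingEnd ℂ) c * z + c * (starRingEnd ℂ) z).re
        = 2 * ((starRingEnd ℂ) c * z).re := by
      have : c * (starRingEnd ℂ) z = (starRingEnd ℂ) ((starRingEnd ℂ) c * z) := by
        rw [_root_.map_mul]; simp
      rw [this, Complex.add_re, Complex.conj_re]; ring
    rw [heq]
    have h1 : ‖(starRingEnd ℂ) c * z‖ ≤ Real.sqrt p := by
      rw [norm_mul, Complex.norm_conj]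
      calc ‖c‖ * ‖z‖ ≤ 1 * Real.sqrt p :=
        mul_le_mul hcabs hzb (norm_nonneg _) (by norm_num)
      _ = Real.sqrt p := one_mul _
    have h2 := neg_abs_le ((starRingEnd ℂ) c * z).re
    have h3 : |((starRingEnd ℂ) c * z).re| ≤ ‖(starRingEnd ℂ) c * z‖ :=
      Complex.abs_re_le_norm _
    linarith
  -- ⟨ω, Cω⟩.re ≥ (1-p) q - 2√p
  have hCω : (1 - p) * q - 2 * Real.sqrt p ≤ (star ω ⬝ᵥ C.mulVec ω).re := by
    rw [hexp, Complex.add_re, Complex.add_re, Complex.re_ofReal_mul]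
    linarith [hcross, ht0]
  -- relate A with B, C
  have hAη : (star η ⬝ᵥ A.mulVec η).re = δ * q := by
    rw [hABC, add_mulVec, hBη, smul_mulVec, zero_add, dotProduct_smul, smul_eq_mul]
    simp [hq, Complex.mul_re]
  have hAω : (star ω ⬝ᵥ A.mulVec ω).re
      = (star ω ⬝ᵥ B.mulVec ω).re + δ * (star ω ⬝ᵥ C.mulVec ω).re := by
    rw [hABC, add_mulVec, smul_mulVec, dotProduct_add, dotProduct_smul, smul_eq_mul]
    simp [Complex.add_re, Complex.mul_re]
  have hBω : 0 ≤ (star ω ⬝ᵥ B.mulVec ω).re := psd_re_nonneg hBpsd ω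
  rw [hAη, hAω]
  have : δ * ((1 - p) * q - 2 * Real.sqrt p) ≤ δ * (star ω ⬝ᵥ C.mulVec ω).re :=
    mul_le_mul_of_nonneg_left hCω hδ
  nlinarith [this, hBω]
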